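/- arXiv:2011.13723 — 2 statements merged into one kernel-verified Lean document; each statement's English description precedes it below -/
import Mathlib

section
/- Fix $\theta > 1$ and an integer $N\ge 1$. For $1\le i\le N$ define $r_i = 1+\sqrt{1-(i-1)/(N\theta^2)}$. Then there exist positive constants $c, C$ (independent of $i$ and $N$) such that for all $3\le i\le N$, $\left| r_{i-1} - r_i - \frac{1}{2N\theta^2(r_i-1)} \right|$ lies between $\frac{c}{N^2\theta^4 (r_i-1)^3}$ and $\frac{C}{N^2\theta^4 (r_i-1)^3}$. -/
set_option maxHeartbeats 1000000 in
/-- Two-sided estimate for the error in the expansion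
`r (i-1) - r i ≈ 1/(2 N θ² (r i - 1))`, with constants independent of `i` and `N`. -/
theorem r_difference_expansion
    (θ : ℝ) (hθ : 1 < θ) :
    ∃ c > (0 : ℝ), ∃ C > (0 : ℝ),
      ∀ (N : ℕ), 1 ≤ N →
        ∀ r : ℕ → ℝ,
          (∀ i : ℕ, r i = 1 + Real.sqrt (1 - ((i : ℝ) - 1) / (N * θ ^ 2))) →
          ∀ i : ℕ, 3 ≤ i → i ≤ N →
            c / (N ^ 2 * θ ^ 4 * (r i - 1) ^ 3)
              ≤ |r (i - 1) - r i - 1 / (2 * N * θ ^ 2 * (r i - 1))| ∧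
            |r (i - 1) - r i - 1 / (2 * N * θ ^ 2 * (r i - 1))|
              ≤ C / (N ^ 2 * θ ^ 4 * (r i - 1) ^ 3) := by
  have hθ0 : (0:ℝ) < θ := lt_trans one_pos hθ
  have hθ2 : 1 < θ^2 := by nlinarith
  have hθinv : 1/θ^2 < 1 := (div_lt_one (by positivity)).mpr hθ2
  have hc0 : (0:ℝ) < (1 - 1/θ^2)/8 := by linarith
  refine ⟨(1 - 1/θ^2)/8, hc0, 1/8, by norm_num, ?_⟩
  intro N hN r hr i hi3 hiN
  have hN0 : (0:ℝ) < N := by exact_mod_cast hN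
  set D : ℝ := (N:ℝ) * θ^2 with hD
  have hD0 : 0 < D := by rw [hD]; positivity
  clear_value D
  set x : ℝ := 1 - ((i:ℝ) - 1)/D with hxdef
  set y : ℝ := 1 - ((i:ℝ) - 2)/D with hydef
  clear_value x y
  have hi3R : (3:ℝ) ≤ (i:ℝ) := by exact_mod_cast hi3
  have hiNR : (i:ℝ) ≤ N := by exact_mod_cast hiN
  have hND : (N:ℝ)/D = 1/θ^2 := by rw [hD]; field_simp
  have hx_ge : 1 - 1/θ^2 ≤ x := by
    have h1 : ((i:ℝ)-1)/D ≤ (N:ℝ)/D := by gcongr; linarith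
    rw [hND] at h1
    simp only [hxdef]; linarith
  have hx_pos : 0 < x := lt_of_lt_of_le (by linarith) hx_ge
  have hy_le : y ≤ 1 := by
    have h1 : 0 ≤ ((i:ℝ)-2)/D := div_nonneg (by linarith) hD0.le
    simp only [hydef]; linarith
  have hyx : y = x + 1/D := by
    simp only [hxdef, hydef]; field_simp; ring
  have hy_pos : 0 < y := by rw [hyx]; positivity
  -- express r i and r (i-1)
  have hri : r i = 1 + Real.sqrt x := by rw [hr i, ← hxdef]
  have hcast : ((i-1:ℕ):ℝ) = (i:ℝ) - 1 := by
    push_cast [Nat.cast_sub (show 1 ≤ i by omega)]; ring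
  have hri1 : r (i-1) = 1 + Real.sqrt y := by
    rw [hr (i-1), hcast]
    have h2 : 1 - ((i:ℝ) - 1 - 1)/D = y := by rw [hydef]; ring_nf
    rw [h2]
  set s : ℝ := Real.sqrt x with hsdef
  set t : ℝ := Real.sqrt y with htdef
  clear_value s t
  have hs0 : 0 < s := by rw [hsdef]; exact Real.sqrt_pos.mpr hx_pos
  have hs2 : s^2 = x := by rw [hsdef]; exact Real.sq_sqrt hx_pos.le
  have ht2 : t^2 = y := by rw [htdef]; exact Real.sq_sqrt hy_pos.le
  have hst : s ≤ t := by
    rw [hsdef, htdef]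
    apply Real.sqrt_le_sqrt
    rw [hyx]
    have h0 : 0 < 1/D := by positivity
    linarith
  have ht1 : t ≤ 1 := by rw [htdef]; exact Real.sqrt_le_one.mpr hy_le
  have hts0 : 0 < t + s := by linarith
  have key : t^2 - s^2 = 1/D := by rw [ht2, hs2, hyx]; ring
  have key2 : D*(t^2-s^2) = 1 := by rw [key]; field_simp
  have hs_eq : r i - 1 = s := by rw [hri]; ring
  have hDD : (N:ℝ)^2 * θ^4 = D^2 := by rw [hD]; ring
  -- exact value of the error
  have hval : r (i-1) - r i - 1/(2*(N:ℝ)*θ^2*(r i - 1))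
      = -(1/(D^2 * (2*s*(t+s)^2))) := by
    rw [hri, hri1]
    have hD2 : 2*(N:ℝ)*θ^2*(1+s-1) = 2*D*s := by rw [hD]; ring
    rw [hD2]
    field_simp
    linear_combination (2*D*s*(t+s) - 1) * key2
  have hA : 0 < D^2 * s^3 := mul_pos (by positivity) (pow_pos hs0 3)
  have hB : 0 < D^2 * (2*s*(t+s)^2) :=
    mul_pos (by positivity) (mul_pos (by linarith) (pow_pos hts0 2))
  have habs : |r (i-1) - r i - 1/(2*(N:ℝ)*θ^2*(r i - 1))|
      = 1/(D^2 * (2*s*(t+s)^2)) := by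
    rw [hval, abs_neg, abs_of_nonneg (le_of_lt (div_pos one_pos hB))]
  have hs2ge : 1 - 1/θ^2 ≤ s^2 := by rw [hs2]; exact hx_ge
  have hts2 : (t+s)^2 ≤ 4 := by
    have h2 : t + s ≤ 2 := by linarith
    calc (t+s)^2 ≤ 2^2 := pow_le_pow_left₀ hts0.le h2 2
      _ = 4 := by norm_num
  constructor
  · rw [habs, hs_eq, hDD, div_le_div_iff₀ hA hB]
    have h1 : s*(t+s)^2 ≤ 4*s := by
      calc s*(t+s)^2 ≤ s*4 := mul_le_mul_of_nonneg_left hts2 hs0.le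
        _ = 4*s := by ring
    have h2 : (1 - 1/θ^2)*s ≤ s^3 := by
      calc (1 - 1/θ^2)*s = s*(1 - 1/θ^2) := by ring
        _ ≤ s*s^2 := mul_le_mul_of_nonneg_left hs2ge hs0.le
        _ = s^3 := by ring
    have base : (1 - 1/θ^2)/8 * (2*s*(t+s)^2) ≤ s^3 := by
      calc (1 - 1/θ^2)/8 * (2*s*(t+s)^2)
          = 2*((1 - 1/θ^2)/8)*(s*(t+s)^2) := by ring
        _ ≤ 2*((1 - 1/θ^2)/8)*(4*s) :=
            mul_le_mul_of_nonneg_left h1 (by linarith)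
        _ = (1 - 1/θ^2)*s := by ring
        _ ≤ s^3 := h2
    calc (1 - 1/θ^2)/8 * (D^2*(2*s*(t+s)^2))
        = D^2 * ((1 - 1/θ^2)/8 * (2*s*(t+s)^2)) := by ring
      _ ≤ D^2 * s^3 := mul_le_mul_of_nonneg_left base (sq_nonneg D)
      _ = 1 * (D^2 * s^3) := by ring
  · rw [habs, hs_eq, hDD, div_le_div_iff₀ hB hA]
    have h4 : 4*s^2 ≤ (t+s)^2 := by
      calc 4*s^2 = (2*s)^2 := by ring
        _ ≤ (t+s)^2 := pow_le_pow_left₀ (by linarith) (by linarith) 2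
    have base : s^3 ≤ 1/8 * (2*s*(t+s)^2) := by
      calc s^3 = (1/4)*(s*(4*s^2)) := by ring
        _ ≤ (1/4)*(s*(t+s)^2) :=
            mul_le_mul_of_nonneg_left
              (mul_le_mul_of_nonneg_left h4 hs0.le) (by norm_num)
        _ = 1/8 * (2*s*(t+s)^2) := by ring
    calc 1 * (D^2 * s^3) = D^2 * s^3 := by ring
      _ ≤ D^2 * (1/8 * (2*s*(t+s)^2)) := mul_le_mul_of_nonneg_left base (sq_nonneg D)
      _ = 1/8 * (D^2*(2*s*(t+s)^2)) := by ring
end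

section
/- Let $\theta_N = 1 + N^{-2/3} w_N$ where $w_N \to \infty$ with $w_N = o(\log^2 N)$, and define $\gamma_i = \frac{1-\sqrt{1-(i-1)/(N\theta_N^2)}}{1+\sqrt{1-(i-1)/(N\theta_N^2)}}$. Then for all sufficiently large $N$: for any indices $i, j$ with $N - (\theta_N^2 N)^{1/3}\log^3 N \le i < j \le i + (\theta_N^2 N)^{1/3}\log^{-2} N$ and $j \le N$, the product satisfies $\gamma_{i+1}\gamma_{i+2}\cdots\gamma_j \ge 1/2$. -/
open Filter
open scoped BigOperators

set_option maxHeartbeats 1000000 in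
/-- Products of consecutive `γ`'s close to the edge stay above `1/2`
(Lemma on γ products for `θ_N = 1 + N^{-2/3} w_N`, `w_N → ∞`, `w_N ≪ log² N`). -/
theorem gamma_product_lower_bound
    (w : ℕ → ℝ) (hwpos : ∀ N, 0 < w N)
    (hwinf : Tendsto w atTop atTop)
    (hwo : w =o[atTop] fun N : ℕ => (Real.log N) ^ 2)
    (θ : ℕ → ℝ) (hθ : ∀ N : ℕ, θ N = 1 + (N : ℝ) ^ (-(2 : ℝ) / 3) * w N)
    (γ : ℕ → ℕ → ℝ)
    (hγ : ∀ N k : ℕ, γ N k =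
      (1 - Real.sqrt (1 - ((k : ℝ) - 1) / (N * θ N ^ 2))) /
      (1 + Real.sqrt (1 - ((k : ℝ) - 1) / (N * θ N ^ 2)))) :
    ∀ᶠ N : ℕ in atTop, ∀ i j : ℕ,
      (N : ℝ) - (θ N ^ 2 * N) ^ ((1 : ℝ) / 3) * (Real.log N) ^ 3 ≤ (i : ℝ) →
      i < j →
      (j : ℝ) ≤ (i : ℝ) + (θ N ^ 2 * N) ^ ((1 : ℝ) / 3) * (Real.log N) ^ (-(2 : ℝ)) →
      j ≤ N →
      (1 : ℝ) / 2 ≤ ∏ k ∈ Finset.Icc (i + 1) j, γ N k := by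
  have hlogN : Tendsto (fun N : ℕ => Real.log N) atTop atTop :=
    Real.tendsto_log_atTop.comp tendsto_natCast_atTop_atTop
  have h320 : ∀ᶠ N : ℕ in atTop, (320 : ℝ) ≤ Real.log N :=
    hlogN.eventually_ge_atTop 320
  have hwle : ∀ᶠ N : ℕ in atTop, w N ≤ (Real.log N) ^ 2 := by
    filter_upwards [hwo.def one_pos] with N h
    have h2 : |w N| ≤ 1 * |(Real.log N) ^ 2| := by simpa [Real.norm_eq_abs] using h
    calc w N ≤ |w N| := le_abs_self _
      _ ≤ 1 * |(Real.log N) ^ 2| := h2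
      _ = (Real.log N) ^ 2 := by rw [one_mul, abs_of_nonneg (sq_nonneg _)]
  have hlogsq : ∀ᶠ N : ℕ in atTop, |Real.log N| ≤ (N : ℝ) ^ ((1 : ℝ) / 3) := by
    filter_upwards [tendsto_natCast_atTop_atTop.eventually
      ((isLittleO_log_rpow_atTop (by norm_num : (0:ℝ) < 1/3)).def one_pos)] with N h
    simpa [Real.norm_eq_abs, abs_of_nonneg (Real.rpow_nonneg (Nat.cast_nonneg N) _)] using h
  filter_upwards [h320, hwle, hlogsq, eventually_ge_atTop 1] with N hL320 hwN hlsq hN1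
  intro i j hi hij hj hjN
  have ht1 : (1 : ℝ) ≤ (N : ℝ) := by exact_mod_cast hN1
  have ht0 : (0 : ℝ) < (N : ℝ) := by linarith
  set L := Real.log N with hLdef
  set X := (N : ℝ) ^ ((1 : ℝ) / 3) with hXdef
  have hXpos : 0 < X := Real.rpow_pos_of_pos ht0 _
  have hX3 : X ^ 3 = (N : ℝ) := by
    rw [hXdef, ← Real.rpow_natCast ((N:ℝ) ^ ((1:ℝ)/3)) 3, ← Real.rpow_mul ht0.le]
    norm_num
  have hX2 : X ^ 2 = (N : ℝ) ^ ((2 : ℝ) / 3) := by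
    rw [hXdef, ← Real.rpow_natCast ((N:ℝ) ^ ((1:ℝ)/3)) 2, ← Real.rpow_mul ht0.le]
    norm_num
  have hL1 : (1 : ℝ) ≤ L := by linarith
  have hLsq : L ^ 2 ≤ X ^ 2 := by
    calc L ^ 2 = |L| ^ 2 := (sq_abs L).symm
      _ ≤ X ^ 2 := pow_le_pow_left₀ (abs_nonneg _) hlsq 2
  have hneg : (N : ℝ) ^ (-(2 : ℝ) / 3) = (X ^ 2)⁻¹ := by
    rw [show -(2:ℝ)/3 = -((2:ℝ)/3) by ring, Real.rpow_neg ht0.le, hX2]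
  have hθd : θ N = 1 + (X ^ 2)⁻¹ * w N := by rw [hθ N, hneg]
  have hd0 : 0 < (X ^ 2)⁻¹ * w N := mul_pos (by positivity) (hwpos N)
  have hwX : w N ≤ X ^ 2 := le_trans hwN hLsq
  have hd1 : (X ^ 2)⁻¹ * w N ≤ 1 := by
    calc (X ^ 2)⁻¹ * w N ≤ (X ^ 2)⁻¹ * X ^ 2 := by
          apply mul_le_mul_of_nonneg_left hwX (by positivity)
      _ = 1 := inv_mul_cancel₀ (by positivity)
  have hθ1 : 1 < θ N := by rw [hθd]; linarith
  have hθ2 : θ N ≤ 2 := by rw [hθd]; linarith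
  set B := (N : ℝ) * θ N ^ 2 with hBdef
  have hθ0 : (0:ℝ) ≤ θ N := by linarith
  have hθsq1 : 1 ≤ θ N ^ 2 := by
    linarith [mul_le_mul hθ1.le hθ1.le zero_le_one hθ0]
  have hθsq4 : θ N ^ 2 ≤ 4 := by
    linarith [mul_le_mul hθ2 hθ2 hθ0 (by norm_num : (0:ℝ) ≤ 2)]
  have hB1 : (N : ℝ) ≤ B := by
    rw [hBdef]; linarith [mul_le_mul_of_nonneg_left hθsq1 ht0.le]
  have hB4 : B ≤ 4 * (N : ℝ) := by
    rw [hBdef]; linarith [mul_le_mul_of_nonneg_left hθsq4 ht0.le]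
  have hB0 : (0 : ℝ) < B := by linarith
  -- B - N ≤ 3 X L²
  have hNd : (N : ℝ) * ((X ^ 2)⁻¹ * w N) = X * w N := by
    rw [← hX3]; field_simp
  have hBt : B - (N : ℝ) ≤ 3 * X * L ^ 2 := by
    have h1 : B - (N : ℝ) = (N:ℝ) * (θ N ^ 2 - 1) := by rw [hBdef]; ring
    have h2 : θ N ^ 2 - 1 ≤ 3 * ((X ^ 2)⁻¹ * w N) := by
      rw [hθd]
      linarith [mul_le_mul_of_nonneg_left hd1 hd0.le]
    have h3 : (N:ℝ) * (θ N ^2 - 1) ≤ (N:ℝ) * (3 * ((X ^ 2)⁻¹ * w N)) :=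
      mul_le_mul_of_nonneg_left h2 ht0.le
    have h4 : (N:ℝ) * (3 * ((X ^ 2)⁻¹ * w N)) = 3 * (X * w N) := by
      rw [show (N:ℝ) * (3 * ((X ^ 2)⁻¹ * w N)) = 3 * ((N:ℝ) * ((X ^ 2)⁻¹ * w N)) by ring, hNd]
    linarith [h1, h3, h4, mul_le_mul_of_nonneg_left hwN hXpos.le]
  -- A ≤ 2X
  have hA : (θ N ^ 2 * (N:ℝ)) ^ ((1 : ℝ) / 3) ≤ 2 * X := by
    have h48 : (4:ℝ) ^ ((1:ℝ)/3) ≤ 2 := by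
      have h1 : (4:ℝ) ^ ((1:ℝ)/3) ≤ (8:ℝ) ^ ((1:ℝ)/3) :=
        Real.rpow_le_rpow (by norm_num) (by norm_num) (by norm_num)
      have h2 : (8:ℝ) ^ ((1:ℝ)/3) = 2 := by
        rw [show (8:ℝ) = (2:ℝ) ^ (3:ℕ) by norm_num, ← Real.rpow_natCast (2:ℝ) 3,
          ← Real.rpow_mul (by norm_num : (0:ℝ) ≤ 2)]
        norm_num
      linarith
    calc (θ N ^ 2 * (N:ℝ)) ^ ((1 : ℝ) / 3)
        ≤ (4 * (N:ℝ)) ^ ((1:ℝ)/3) :=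
          Real.rpow_le_rpow (by positivity)
            (by linarith [mul_le_mul_of_nonneg_right hθsq4 ht0.le]) (by norm_num)
      _ = (4:ℝ) ^ ((1:ℝ)/3) * X := by
          rw [Real.mul_rpow (by norm_num) ht0.le, hXdef]
      _ ≤ 2 * X := mul_le_mul_of_nonneg_right h48 hXpos.le
  -- B - i ≤ 5 X L³
  have hL3 : L ^ 2 ≤ L ^ 3 := by
    linarith [mul_le_mul_of_nonneg_left hL1 (sq_nonneg L)]
  have hBi : B - (i:ℝ) ≤ 5 * X * L ^ 3 := by
    have hAL : (θ N ^ 2 * (N:ℝ)) ^ ((1 : ℝ) / 3) * L ^ 3 ≤ 2 * X * L ^ 3 :=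
      mul_le_mul_of_nonneg_right hA (by positivity)
    linarith [hi, hBt, hAL, mul_le_mul_of_nonneg_left hL3 (by positivity : (0:ℝ) ≤ 3 * X)]
  -- a and its bounds
  have hiN : (i : ℝ) ≤ (N : ℝ) := by exact_mod_cast Nat.cast_le.mpr (le_of_lt (lt_of_lt_of_le hij hjN))
  have hiB : (i : ℝ) ≤ B := le_trans hiN hB1
  have h1iB : 0 ≤ 1 - (i : ℝ) / B := by
    rw [sub_nonneg, div_le_one hB0]; exact hiB
  set a := Real.sqrt (1 - (i : ℝ) / B) with hadef
  have ha0 : 0 ≤ a := Real.sqrt_nonneg _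
  have ha2 : a ^ 2 = 1 - (i : ℝ) / B := Real.sq_sqrt h1iB
  have haB : a ^ 2 * B = B - (i:ℝ) := by rw [ha2]; field_simp
  have ha2X : a ^ 2 * X ^ 2 ≤ 5 * L ^ 3 := by
    have h1 : a ^ 2 * X ^ 2 * X ≤ 5 * L ^ 3 * X := by
      have e : a ^ 2 * X ^ 3 = a ^ 2 * (N:ℝ) := by rw [hX3]
      linarith [mul_le_mul_of_nonneg_left hB1 (sq_nonneg a), e, haB, hBi]
    exact le_of_mul_le_mul_right h1 hXpos
  -- n and its bounds
  set n := j - i with hndef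
  have hn1 : 1 ≤ n := by omega
  have hnr : (n : ℝ) = (j : ℝ) - (i : ℝ) := by
    rw [hndef]; push_cast [Nat.cast_sub hij.le]; ring
  have hcard : (Finset.Icc (i + 1) j).card = n := by
    rw [Nat.card_Icc]; omega
  have hLneg : L ^ (-(2:ℝ)) = (L ^ 2)⁻¹ := by
    rw [Real.rpow_neg (by linarith : (0:ℝ) ≤ L), show (2:ℝ) = ((2:ℕ):ℝ) by norm_num,
      Real.rpow_natCast]
  have hnL : (n : ℝ) * L ^ 2 ≤ 2 * X := by
    have h2 : (n : ℝ) ≤ 2 * X * (L ^ 2)⁻¹ := by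
      rw [hnr]
      calc (j : ℝ) - (i : ℝ) ≤ (θ N ^ 2 * (N:ℝ)) ^ ((1 : ℝ) / 3) * L ^ (-(2:ℝ)) := by
            linarith
        _ = (θ N ^ 2 * (N:ℝ)) ^ ((1 : ℝ) / 3) * (L ^ 2)⁻¹ := by rw [hLneg]
        _ ≤ 2 * X * (L ^ 2)⁻¹ := mul_le_mul_of_nonneg_right hA (by positivity)
    have hLne : L ≠ 0 := by linarith
    have e : 2 * X * (L ^ 2)⁻¹ * L ^ 2 = 2 * X := by field_simp
    linarith [mul_le_mul_of_nonneg_right h2 (sq_nonneg L), e]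
  -- main quantitative bound
  have hn0r : (0:ℝ) ≤ (n:ℝ) := Nat.cast_nonneg n
  have hmain : 2 * a * (n : ℝ) ≤ 1 / 2 := by
    have h2sq : ((n:ℝ) * L ^ 2) ^ 2 ≤ (2 * X) ^ 2 :=
      pow_le_pow_left₀ (by positivity) hnL 2
    have h3 : (a ^ 2 * X ^ 2) * (((n:ℝ) * L ^ 2) ^ 2) ≤ (5 * L ^ 3) * ((2 * X) ^ 2) :=
      mul_le_mul ha2X h2sq (by positivity) (by positivity)
    have h4 : a ^ 2 * (n:ℝ) ^ 2 * L ≤ 20 := by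
      have hpos : (0:ℝ) < L ^ 3 * X ^ 2 := by positivity
      have h5 : a ^ 2 * (n:ℝ) ^ 2 * L * (L ^ 3 * X ^ 2) ≤ 20 * (L ^ 3 * X ^ 2) := by
        linarith [h3]
      exact le_of_mul_le_mul_right h5 hpos
    have h6 : a ^ 2 * (n:ℝ) ^ 2 ≤ 1 / 16 := by
      linarith [h4, mul_le_mul_of_nonneg_left hL320 (by positivity : (0:ℝ) ≤ a ^ 2 * (n:ℝ) ^ 2)]
    linarith [h6, sq_nonneg (a * (n:ℝ) - 1/4), mul_nonneg ha0 hn0r]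
  have hn1r : (1:ℝ) ≤ (n:ℝ) := by exact_mod_cast hn1
  have ha14 : a ≤ 1/4 := by
    linarith [hmain, mul_le_mul_of_nonneg_left hn1r ha0]
  -- per-factor bound
  have hfac : ∀ k ∈ Finset.Icc (i + 1) j, 1 - 2 * a ≤ γ N k := by
    intro k hk
    obtain ⟨hk1, hk2⟩ := Finset.mem_Icc.mp hk
    have hk1r : (i:ℝ) + 1 ≤ (k:ℝ) := by exact_mod_cast hk1
    rw [hγ N k, ← hBdef]
    set s := Real.sqrt (1 - ((k : ℝ) - 1) / B) with hsdef
    have hs0 : 0 ≤ s := Real.sqrt_nonneg _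
    have hsa : s ≤ a := by
      apply Real.sqrt_le_sqrt
      have h : (i:ℝ) / B ≤ ((k:ℝ) - 1) / B := by
        gcongr <;> linarith
      linarith [h]
    rw [le_div_iff₀ (by linarith : (0:ℝ) < 1 + s)]
    linarith [sq_nonneg s, mul_nonneg (sub_nonneg.mpr hsa) (by linarith : (0:ℝ) ≤ 1 + s)]
  -- assemble
  calc (1:ℝ)/2 ≤ 1 - 2 * a * (n:ℝ) := by linarith
    _ ≤ (1 - 2 * a) ^ n := by
        have h := one_add_mul_le_pow (show (-2:ℝ) ≤ -(2 * a) by linarith) n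
        calc 1 - 2 * a * (n:ℝ) = 1 + (n:ℝ) * (-(2 * a)) := by ring
          _ ≤ (1 + -(2 * a)) ^ n := h
          _ = (1 - 2 * a) ^ n := by ring_nf
    _ = ∏ k ∈ Finset.Icc (i + 1) j, (1 - 2 * a) := by
        rw [Finset.prod_const, hcard]
    _ ≤ ∏ k ∈ Finset.Icc (i + 1) j, γ N k :=
        Finset.prod_le_prod (fun k _ => by linarith) hfac
end
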